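/- Define v_G = (I−D_G)·1 ∈ ℝ^{V} and v_A = (I−D_A)·ρ ∈ ℝ^{Ê}, where D_G and D_A are diagonal matrices with all diagonal entries different from 1. Then v_G and v_A are left eigenvectors with eigenvalue 1 of M_G = (I−D_G)⁻¹(T_G−D_G) and M_A = (I−D_A)⁻¹(T_A−D_A) respectively: v_Gᵀ M_G = v_Gᵀ and v_Aᵀ M_A = v_Aᵀ. -/

import Mathlib

set_option linter.unusedSectionVars false


open Matrix BigOperators

noncomputable section

variable {V : Type*} [Fintype V] [DecidableEq V]

/-- The extended index set `Ê = {(e,i) : e ∈ E, i an endpoint of e}`. -/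
abbrev Ehat (G : SimpleGraph V) [DecidableRel G.Adj] : Type _ :=
  {p : Sym2 V × V // p.1 ∈ G.edgeSet ∧ p.2 ∈ p.1}

/-- The `|Ê| × |V|` matrix `S`, with `S_{(e,i),j} = 1` iff `j = i`. -/
def Smat (G : SimpleGraph V) [DecidableRel G.Adj] : Matrix (Ehat G) V ℝ :=
  fun p j => if p.val.2 = j then 1 else 0

/-- The `|Ê| × |Ê|` block-diagonal matrix `Q`, whose block for edge `e = (i,j)` acts on
coordinates `(e,i), (e,j)` as `q_e · [[1,-1],[-1,1]]`. -/
def Qmat (G : SimpleGraph V) [DecidableRel G.Adj] (q : Sym2 V → ℝ) :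
    Matrix (Ehat G) (Ehat G) ℝ :=
  fun p p' =>
    if p.val.1 = p'.val.1 then (if p.val.2 = p'.val.2 then q p.val.1 else - q p.val.1) else 0

/-- The element `(e, i)` of `Ê` associated with an edge `e = (i,j)`. -/
def eFst {G : SimpleGraph V} [DecidableRel G.Adj] {i j : V} (h : G.Adj i j) : Ehat G :=
  ⟨(s(i,j), i), ⟨G.mem_edgeSet.mpr h, Sym2.mem_mk_left i j⟩⟩

/-- The element `(e, j)` of `Ê` associated with an edge `e = (i,j)`. -/
def eSnd {G : SimpleGraph V} [DecidableRel G.Adj] {i j : V} (h : G.Adj i j) : Ehat G :=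
  ⟨(s(i,j), j), ⟨G.mem_edgeSet.mpr h, Sym2.mem_mk_right i j⟩⟩

/-- For `(e,i) ∈ Ê` with `e = (i,j)`, the element `(e,j)` given by the other endpoint. -/
def otherE {G : SimpleGraph V} [DecidableRel G.Adj] (p : Ehat G) : Ehat G :=
  ⟨(p.val.1, Sym2.Mem.other' p.prop.2), ⟨p.prop.1, Sym2.other_mem' p.prop.2⟩⟩


variable {G : SimpleGraph V} [DecidableRel G.Adj]

lemma otherE_fst (p : Ehat G) : (otherE p).val.1 = p.val.1 := rfl

lemma otherE_snd_ne (p : Ehat G) : (otherE p).val.2 ≠ p.val.2 := by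
  have hd := G.not_isDiag_of_mem_edgeSet p.prop.1
  have := Sym2.other_ne hd p.prop.2
  rwa [Sym2.other_eq_other'] at this

lemma otherE_ne (p : Ehat G) : otherE p ≠ p := fun h =>
  otherE_snd_ne p (by rw [h])

lemma otherE_otherE (p : Ehat G) : otherE (otherE p) = p := by
  exact Subtype.ext (Prod.ext rfl (Sym2.other_invol' p.prop.2 (otherE p).prop.2))

lemma eq_or_eq_otherE {p p' : Ehat G} (h : p.val.1 = p'.val.1) :
    p = p' ∨ p = otherE p' := by
  have hm : p.val.2 ∈ p'.val.1 := h ▸ p.prop.2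
  rw [← Sym2.other_spec' p'.prop.2, Sym2.mem_iff] at hm
  rcases hm with hm | hm
  · left; exact Subtype.ext (Prod.ext h hm)
  · right; exact Subtype.ext (Prod.ext h hm)

/-- Sum over `Ehat` of a function supported on the fiber of `p'.val.1`. -/
lemma sum_fiber (p' : Ehat G) (f : Ehat G → ℝ)
    (hf : ∀ p : Ehat G, p.val.1 ≠ p'.val.1 → f p = 0) :
    ∑ p, f p = f p' + f (otherE p') := by
  rw [← Finset.sum_pair (otherE_ne p').symm]
  symm
  apply Finset.sum_subset (Finset.subset_univ _)
  intro x _ hx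
  simp only [Finset.mem_insert, Finset.mem_singleton, not_or] at hx
  by_cases hfst : x.val.1 = p'.val.1
  · rcases eq_or_eq_otherE hfst with h | h <;> [exact absurd h hx.1; exact absurd h hx.2]
  · exact hf x hfst

lemma colsum_Q (q : Sym2 V → ℝ) (p' : Ehat G) : ∑ p, Qmat G q p p' = 0 := by
  rw [sum_fiber p' _ (fun p hp => by simp [Qmat, hp])]
  simp [Qmat, otherE_snd_ne p', otherE_fst]

lemma Q_mulVec (q : Sym2 V → ℝ) (x : Ehat G → ℝ) (p : Ehat G) :
    (Qmat G q).mulVec x p = q p.val.1 * (x p - x (otherE p)) := by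
  show ∑ p'', Qmat G q p p'' * x p'' = _
  rw [sum_fiber p _ (fun p'' h => by simp [Qmat, Ne.symm h])]
  have h2 : p.val.2 ≠ (otherE p).val.2 := (otherE_snd_ne p).symm
  simp [Qmat, h2, otherE_fst]
  ring

lemma Q_symm (q : Sym2 V → ℝ) : (Qmat G q)ᵀ = Qmat G q := by
  ext p p'
  unfold Qmat
  by_cases h : p.val.1 = p'.val.1
  · change (if p'.val.1 = p.val.1 then (if p'.val.2 = p.val.2 then q p'.val.1 else - q p'.val.1) else 0) = _
    rw [if_pos h, if_pos h.symm, h]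
    by_cases h2 : p.val.2 = p'.val.2
    · rw [if_pos h2, if_pos h2.symm]
    · rw [if_neg h2, if_neg (Ne.symm h2)]
  · change (if p'.val.1 = p.val.1 then (if p'.val.2 = p.val.2 then q p'.val.1 else - q p'.val.1) else 0) = _
    rw [if_neg h, if_neg (Ne.symm h)]

lemma Q_quad_nonneg (q : Sym2 V → ℝ) (hq : ∀ e ∈ G.edgeSet, 0 < q e) (x : Ehat G → ℝ) :
    0 ≤ x ⬝ᵥ (Qmat G q).mulVec x := by
  have hdot : x ⬝ᵥ (Qmat G q).mulVec x
      = ∑ p, x p * (q p.val.1 * (x p - x (otherE p))) := by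
    refine Finset.sum_congr rfl fun p _ => ?_
    rw [Q_mulVec]
  set g : Ehat G → ℝ := fun p => x p * (q p.val.1 * (x p - x (otherE p))) with hg
  have hinv : Function.Involutive (otherE (G := G)) := otherE_otherE
  have hcomp : ∑ p, g (otherE p) = ∑ p, g p := Equiv.sum_comp hinv.toPerm g
  have hkey : ∀ p : Ehat G, g p + g (otherE p) = q p.val.1 * (x p - x (otherE p))^2 := by
    intro p
    simp only [hg, otherE_fst, otherE_otherE]
    ring
  have h2 : 2 * ∑ p, g p = ∑ p, q p.val.1 * (x p - x (otherE p))^2 := by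
    rw [two_mul]
    nth_rewrite 2 [← hcomp]
    rw [← Finset.sum_add_distrib]
    exact Finset.sum_congr rfl fun p _ => hkey p
  have hnn : 0 ≤ ∑ p, q p.val.1 * (x p - x (otherE p))^2 :=
    Finset.sum_nonneg fun p _ => mul_nonneg (hq _ p.prop.1).le (sq_nonneg _)
  rw [hdot]
  linarith

lemma Q_apply_symm (q : Sym2 V → ℝ) (a b : Ehat G) : Qmat G q a b = Qmat G q b a :=
  congrFun (congrFun (Q_symm q) b) a

lemma DQ_posDef (q : Sym2 V → ℝ) (hq : ∀ e ∈ G.edgeSet, 0 < q e)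
    (ρ : Ehat G → ℝ) (hρ : ∀ p, 0 < ρ p) :
    (Matrix.diagonal ρ + Qmat G q).PosDef := by
  refine Matrix.posDef_iff_dotProduct_mulVec.mpr ⟨?_, ?_⟩
  · ext p p'
    simp only [Matrix.conjTranspose_apply, Matrix.add_apply, star_trivial,
      Matrix.diagonal_apply]
    rw [Q_apply_symm q p' p]
    by_cases h : p = p'
    · subst h; rfl
    · rw [if_neg h, if_neg (Ne.symm h)]
  · intro x hx
    have hstar : star x = x := by
      funext p; simp
    rw [hstar, Matrix.add_mulVec, dotProduct_add]
    have h1 : x ⬝ᵥ (Matrix.diagonal ρ).mulVec x = ∑ p, ρ p * (x p)^2 := by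
      refine Finset.sum_congr rfl fun p _ => ?_
      rw [Matrix.mulVec_diagonal]
      ring
    have h2 : 0 < ∑ p, ρ p * (x p)^2 := by
      obtain ⟨p0, hp0⟩ := Function.ne_iff.mp hx
      refine Finset.sum_pos' (fun p _ => mul_nonneg (hρ p).le (sq_nonneg _)) ⟨p0,
        Finset.mem_univ _, mul_pos (hρ p0) (by have h := hp0; simp only [Pi.zero_apply] at h; positivity)⟩
    have h3 := Q_quad_nonneg q hq x
    rw [h1]
    linarith

lemma StDS_eq (ρ : Ehat G → ℝ) :
    (Smat G)ᵀ * Matrix.diagonal ρ * Smat G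
      = Matrix.diagonal (fun j => ∑ p : Ehat G, if p.val.2 = j then ρ p else 0) := by
  ext j k
  rw [Matrix.mul_apply]
  simp only [Matrix.mul_diagonal, Matrix.transpose_apply]
  by_cases h : j = k
  · subst h
    rw [Matrix.diagonal_apply_eq]
    refine Finset.sum_congr rfl fun p _ => ?_
    simp only [Smat]
    by_cases h2 : p.val.2 = j <;> simp [h2]
  · rw [Matrix.diagonal_apply_ne _ h]
    refine Finset.sum_eq_zero fun p _ => ?_
    simp only [Smat]
    by_cases h2 : p.val.2 = j <;> by_cases h3 : p.val.2 = k
    · exact absurd (h2 ▸ h3) h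
    · simp only [Smat, h2, h3]
      simp
      exact fun hjk => absurd hjk h
    · simp only [Smat, h2, h3]
      simp
      exact fun hkj => absurd hkj.symm h
    · simp [h2, h3]

lemma vecMul_smulM {m n : Type*} [Fintype m] (c : ℝ) (M : Matrix m n ℝ) (v : m → ℝ) :
    Matrix.vecMul v (c • M) = c • Matrix.vecMul v M := by
  funext j
  simp [Matrix.vecMul, dotProduct, Finset.mul_sum, mul_left_comm]

lemma diag_inv {m : Type*} [Fintype m] [DecidableEq m] (w : m → ℝ) (hw : ∀ i, w i ≠ 0) :
    (Matrix.diagonal w)⁻¹ = Matrix.diagonal (fun i => (w i)⁻¹) := by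
  apply Matrix.inv_eq_right_inv
  have h : (fun i => w i * (w i)⁻¹) = fun _ => (1:ℝ) := funext fun i => mul_inv_cancel₀ (hw i)
  rw [Matrix.diagonal_mul_diagonal, h, Matrix.diagonal_one]

section Main

variable {G : SimpleGraph V} [DecidableRel G.Adj]

lemma ones_vecMul_St : Matrix.vecMul (fun _ => (1:ℝ)) (Smat G)ᵀ = fun _ => 1 := by
  funext p
  show ∑ j, 1 * (Smat G)ᵀ j p = 1
  simp [Smat, Matrix.transpose_apply]

lemma ones_vecMul_Q (q : Sym2 V → ℝ) :
    Matrix.vecMul (fun _ => (1:ℝ)) (Qmat G q) = 0 := by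
  funext p'
  show ∑ p, 1 * Qmat G q p p' = 0
  simp only [one_mul]
  exact colsum_Q q p'

lemma part1 (q : Sym2 V → ℝ) (α : ℝ) (DG : V → ℝ) (hDG : ∀ b, DG b ≠ 1) :
    Matrix.vecMul ((1 - Matrix.diagonal DG).mulVec (fun _ => 1))
      ((1 - Matrix.diagonal DG)⁻¹ *
        (((1 : Matrix V V ℝ) - α • ((Smat G)ᵀ * Qmat G q * Smat G)) - Matrix.diagonal DG))
      = (1 - Matrix.diagonal DG).mulVec (fun _ => 1) := by
  have hne : ∀ b, (1 : ℝ) - DG b ≠ 0 := fun b => sub_ne_zero.mpr (Ne.symm (hDG b))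
  have hDGd : (1 : Matrix V V ℝ) - Matrix.diagonal DG
      = Matrix.diagonal (fun b => 1 - DG b) := by
    rw [← Matrix.diagonal_one, Matrix.diagonal_sub]
  have hvG : (1 - Matrix.diagonal DG).mulVec (fun _ => (1:ℝ)) = fun b => 1 - DG b := by
    funext b
    rw [hDGd, Matrix.mulVec_diagonal, mul_one]
  have hinvDG : ((1 : Matrix V V ℝ) - Matrix.diagonal DG)⁻¹
      = Matrix.diagonal (fun b => (1 - DG b)⁻¹) := by
    rw [hDGd, diag_inv _ hne]
  have hvGinv : Matrix.vecMul ((1 - Matrix.diagonal DG).mulVec (fun _ => (1:ℝ)))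
      ((1 : Matrix V V ℝ) - Matrix.diagonal DG)⁻¹ = fun _ => 1 := by
    rw [hvG, hinvDG]
    funext b
    rw [Matrix.vecMul_diagonal]
    exact mul_inv_cancel₀ (hne b)
  have hSQS : Matrix.vecMul (fun _ => (1:ℝ)) ((Smat G)ᵀ * Qmat G q * Smat G) = 0 := by
    rw [← Matrix.vecMul_vecMul, ← Matrix.vecMul_vecMul, ones_vecMul_St, ones_vecMul_Q,
      Matrix.zero_vecMul]
  rw [← Matrix.vecMul_vecMul, hvGinv, Matrix.vecMul_sub, Matrix.vecMul_sub,
    Matrix.vecMul_one, vecMul_smulM, hSQS, smul_zero, sub_zero, hvG]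
  funext b
  simp [Matrix.vecMul_diagonal]

lemma part2
    (hG : ∀ v : V, ∃ w, G.Adj v w)
    (q : Sym2 V → ℝ) (hq : ∀ e ∈ G.edgeSet, 0 < q e)
    (ρ : Ehat G → ℝ) (hρ : ∀ p, 0 < ρ p)
    (γ : ℝ) (DA : Ehat G → ℝ) (hDA : ∀ p, DA p ≠ 1) :
    Matrix.vecMul ((1 - Matrix.diagonal DA).mulVec ρ)
      ((1 - Matrix.diagonal DA)⁻¹ *
        (((1 : Matrix (Ehat G) (Ehat G) ℝ)
            - γ • (((1 + (Matrix.diagonal ρ)⁻¹ * Qmat G q)⁻¹)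
              + (Smat G * ((Smat G)ᵀ * Matrix.diagonal ρ * Smat G)⁻¹ * (Smat G)ᵀ
                  * Matrix.diagonal ρ)
              - (2 : ℝ) • ((Smat G * ((Smat G)ᵀ * Matrix.diagonal ρ * Smat G)⁻¹ * (Smat G)ᵀ
                  * Matrix.diagonal ρ) * (1 + (Matrix.diagonal ρ)⁻¹ * Qmat G q)⁻¹)))
          - Matrix.diagonal DA))
      = (1 - Matrix.diagonal DA).mulVec ρ := by
  set S := Smat G with hS
  set Q := Qmat G q with hQdef
  set Dρ := Matrix.diagonal ρ with hDρ
  set A := (1 + Dρ⁻¹ * Q)⁻¹ with hAdef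
  set B := S * (Sᵀ * Dρ * S)⁻¹ * Sᵀ * Dρ with hBdef
  set d : V → ℝ := fun j => ∑ p : Ehat G, if p.val.2 = j then ρ p else 0 with hd
  have hd_pos : ∀ j, 0 < d j := by
    intro j
    obtain ⟨w, hw⟩ := hG j
    refine Finset.sum_pos' (fun p _ => by by_cases h : p.val.2 = j <;> simp [h, (hρ p).le]) ⟨eFst hw, Finset.mem_univ _, ?_⟩
    simp [eFst, hρ _]
  -- ρᵀ Dρ⁻¹ = 1ᵀ
  have hρD : Matrix.vecMul ρ Dρ⁻¹ = fun _ => 1 := by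
    rw [hDρ, diag_inv _ (fun p => (hρ p).ne')]
    funext p
    rw [Matrix.vecMul_diagonal]
    exact mul_inv_cancel₀ (hρ p).ne'
  -- ρᵀ S = d
  have hρS : Matrix.vecMul ρ S = d := by
    funext j
    show ∑ p, ρ p * S p j = d j
    simp [hS, Smat, mul_ite, hd]
  have hdD : Matrix.vecMul d (Matrix.diagonal d)⁻¹ = fun _ => 1 := by
    rw [diag_inv _ (fun j => (hd_pos j).ne')]
    funext j
    rw [Matrix.vecMul_diagonal]
    exact mul_inv_cancel₀ (hd_pos j).ne'
  have honesD : Matrix.vecMul (fun _ => (1:ℝ)) Dρ = ρ := by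
    funext p
    rw [hDρ, Matrix.vecMul_diagonal, one_mul]
  -- ρᵀ B = ρᵀ
  have hB : Matrix.vecMul ρ B = ρ := by
    rw [hBdef, StDS_eq, ← Matrix.vecMul_vecMul, ← Matrix.vecMul_vecMul,
      ← Matrix.vecMul_vecMul, hρS, ← hd, hdD, ones_vecMul_St, honesD]
  -- invertibility of 1 + Dρ⁻¹ Q
  have hDdet : IsUnit Dρ.det := by
    rw [hDρ, Matrix.det_diagonal]
    exact isUnit_iff_ne_zero.mpr (Finset.prod_pos fun p _ => hρ p).ne'
  have hDQdet : IsUnit (Dρ + Q).det :=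
    isUnit_iff_ne_zero.mpr (DQ_posDef q hq ρ hρ).det_pos.ne'
  have hfact : (1 : Matrix (Ehat G) (Ehat G) ℝ) + Dρ⁻¹ * Q = Dρ⁻¹ * (Dρ + Q) := by
    rw [Matrix.mul_add, Matrix.nonsing_inv_mul _ hDdet]
  have hIdet : IsUnit ((1 : Matrix (Ehat G) (Ehat G) ℝ) + Dρ⁻¹ * Q).det := by
    rw [hfact, Matrix.det_mul]
    exact (Matrix.isUnit_nonsing_inv_det _ hDdet).mul hDQdet
  have hmulinv : ((1 : Matrix (Ehat G) (Ehat G) ℝ) + Dρ⁻¹ * Q) * A = 1 :=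
    Matrix.mul_nonsing_inv _ hIdet
  have hρIQ : Matrix.vecMul ρ (1 + Dρ⁻¹ * Q) = ρ := by
    rw [Matrix.vecMul_add, Matrix.vecMul_one, ← Matrix.vecMul_vecMul, hρD,
      hQdef, ones_vecMul_Q, add_zero]
  have hA : Matrix.vecMul ρ A = ρ := by
    have h := congrArg (fun M => Matrix.vecMul ρ M) hmulinv
    rw [← Matrix.vecMul_vecMul, hρIQ] at h
    rwa [Matrix.vecMul_one] at h
  have hBA : Matrix.vecMul ρ (B * A) = ρ := by
    rw [← Matrix.vecMul_vecMul, hB, hA]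
  -- ρᵀ TA = ρᵀ
  have hTA : Matrix.vecMul ρ
      ((1 : Matrix (Ehat G) (Ehat G) ℝ) - γ • (A + B - (2:ℝ) • (B * A))) = ρ := by
    rw [Matrix.vecMul_sub, Matrix.vecMul_one, vecMul_smulM, Matrix.vecMul_sub,
      Matrix.vecMul_add, vecMul_smulM, hA, hB, hBA]
    funext p
    simp only [Pi.sub_apply, Pi.smul_apply, Pi.add_apply, smul_eq_mul]
    ring
  -- assemble
  have hne : ∀ p, (1 : ℝ) - DA p ≠ 0 := fun p => sub_ne_zero.mpr (Ne.symm (hDA p))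
  have hDAd : (1 : Matrix (Ehat G) (Ehat G) ℝ) - Matrix.diagonal DA
      = Matrix.diagonal (fun p => 1 - DA p) := by
    rw [← Matrix.diagonal_one, Matrix.diagonal_sub]
  have hvA : (1 - Matrix.diagonal DA).mulVec ρ = fun p => (1 - DA p) * ρ p := by
    funext p
    rw [hDAd, Matrix.mulVec_diagonal]
  have hinvDA : ((1 : Matrix (Ehat G) (Ehat G) ℝ) - Matrix.diagonal DA)⁻¹
      = Matrix.diagonal (fun p => (1 - DA p)⁻¹) := by
    rw [hDAd, diag_inv _ hne]
  have hvAinv : Matrix.vecMul ((1 - Matrix.diagonal DA).mulVec ρ)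
      ((1 : Matrix (Ehat G) (Ehat G) ℝ) - Matrix.diagonal DA)⁻¹ = ρ := by
    rw [hvA, hinvDA]
    funext p
    rw [Matrix.vecMul_diagonal, mul_right_comm, mul_inv_cancel₀ (hne p), one_mul]
  rw [← Matrix.vecMul_vecMul, hvAinv, Matrix.vecMul_sub, hTA, hvA]
  funext p
  rw [Pi.sub_apply, Matrix.vecMul_diagonal]
  ring

end Main


/-- **`v_G` and `v_A` are left eigenvectors with eigenvalue 1.**
With `v_G = (I - D_G)·1` and `v_A = (I - D_A)·ρ`, where `D_G, D_A` are diagonal with all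
diagonal entries different from `1`, one has `v_Gᵀ M_G = v_Gᵀ` and `v_Aᵀ M_A = v_Aᵀ`. -/
theorem vG_vA_left_eigenvectors
    (G : SimpleGraph V) [DecidableRel G.Adj]
    (hG : ∀ v : V, ∃ w, G.Adj v w)
    (q : Sym2 V → ℝ) (hq : ∀ e ∈ G.edgeSet, 0 < q e)
    (ρ : Ehat G → ℝ) (hρ : ∀ p, 0 < ρ p)
    (γ : ℝ) (hγ : γ ∈ Set.Ioo (0 : ℝ) 2) (α : ℝ)
    (DG : V → ℝ) (hDG : ∀ b, DG b ≠ 1)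
    (DA : Ehat G → ℝ) (hDA : ∀ p, DA p ≠ 1) :
    let S := Smat G
    let Q := Qmat G q
    let Dρ := Matrix.diagonal ρ
    let A := (1 + Dρ⁻¹ * Q)⁻¹
    let B := S * (Sᵀ * Dρ * S)⁻¹ * Sᵀ * Dρ
    let TA := 1 - γ • (A + B - (2 : ℝ) • (B * A))
    let TG := (1 : Matrix V V ℝ) - α • (Sᵀ * Q * S)
    let MG := (1 - Matrix.diagonal DG)⁻¹ * (TG - Matrix.diagonal DG)
    let MA := (1 - Matrix.diagonal DA)⁻¹ * (TA - Matrix.diagonal DA)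
    let vG := (1 - Matrix.diagonal DG).mulVec (fun _ => 1)
    let vA := (1 - Matrix.diagonal DA).mulVec ρ
    Matrix.vecMul vG MG = vG ∧ Matrix.vecMul vA MA = vA := by
  intro S Q Dρ A B TA TG MG MA vG vA
  exact ⟨part1 q α DG hDG, part2 hG q hq ρ hρ γ DA hDA⟩
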